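/- Let D₀ ⊆ ℂ be a nonempty bounded convex open set and let ζ₀ ∈ D₀ be a point at maximal distance to the boundary, i.e. dist(ζ₀, ∂D₀) = sup_{ζ ∈ D₀} dist(ζ, ∂D₀); write R = dist(ζ₀, ∂D₀). Then there exist two distinct points p̂, q̂ ∈ ∂D₀ with |p̂ − ζ₀| = |q̂ − ζ₀| = R and |p̂ − q̂| ≥ √3 · R. -/

import Mathlib

open Metric Set Complex ComplexConjugate

private lemma key_homog (r2 A B X Y : ℝ) (hr2 : 0 < r2)
    (hab : A ^ 2 + B ^ 2 = r2 ^ 2) (hxy : X ^ 2 + Y ^ 2 = r2 ^ 2)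
    (hA : -(r2 / 2) < A) (h1 : A ≤ X) (h2 : A * r2 ≤ X * A + Y * B) :
    r2 * (r2 + A) ≤ X * (r2 + A) + B * Y := by
  have hXle : X ≤ r2 := by nlinarith [sq_nonneg Y, sq_nonneg (X - r2), sq_nonneg (X + r2)]
  have hrA : 0 < r2 + A := by linarith
  have hT : 0 ≤ (r2 + A) * (r2 - X) := mul_nonneg hrA.le (by linarith)
  have hB2 : B ^ 2 = r2 ^ 2 - A ^ 2 := by linarith
  have hY2 : Y ^ 2 = r2 ^ 2 - X ^ 2 := by linarith
  have hBYsq : (B * Y) ^ 2 = (r2 ^ 2 - A ^ 2) * (r2 ^ 2 - X ^ 2) := by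
    rw [mul_pow, hB2, hY2]
  have hint : 0 ≤ 2 * r2 * ((r2 + A) * ((r2 - X) * (X - A))) := by
    apply mul_nonneg (by linarith)
    apply mul_nonneg hrA.le
    apply mul_nonneg (by linarith) (by linarith)
  have hsq : ((r2 + A) * (r2 - X)) ^ 2 ≤ (B * Y) ^ 2 := by nlinarith [hBYsq, hint]
  have hmain : (r2 + A) * (r2 - X) ≤ B * Y := by
    rcases le_or_gt 0 (B * Y) with hBY | hBY
    · nlinarith [hsq, hT, hBY]
    · exfalso
      have hBY2 : B * Y ≤ -((r2 + A) * (r2 - X)) := by nlinarith [hsq, hT]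
      have h3 : A * (r2 - X) ≤ B * Y := by nlinarith
      have h4 : (2 * A + r2) * (r2 - X) ≤ 0 := by nlinarith
      have hXr2 : r2 ≤ X := by nlinarith
      have hXeq : X = r2 := le_antisymm hXle hXr2
      have hY : Y = 0 := by nlinarith [sq_nonneg Y]
      rw [hY, mul_zero] at hBY
      exact lt_irrefl 0 hBY
  nlinarith [hmain]

private lemma re_mul_conj' (S U : ℂ) :
    2 * (S * conj U).re = Complex.normSq S + Complex.normSq U - Complex.normSq (S - U) := by
  simp [Complex.normSq_apply, Complex.mul_re, Complex.sub_re, Complex.sub_im]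
  ring

private lemma inner_assoc' (S U W : ℂ) :
    (S * conj U).re * (W * conj U).re + (S * conj U).im * (W * conj U).im
      = Complex.normSq U * (S * conj W).re := by
  simp [Complex.normSq_apply, Complex.mul_re, Complex.mul_im]
  ring

private lemma dist_sq_eq_normSq (z w : ℂ) : dist z w ^ 2 = Complex.normSq (z - w) := by
  rw [Complex.dist_eq, Complex.sq_norm]

set_option maxHeartbeats 1000000 in
/-- Let `D₀ ⊆ ℂ` be a nonempty bounded convex open set and `ζ₀ ∈ D₀` a point at
maximal distance `R` to the boundary. Then there are two distinct boundary points
`p̂, q̂` with `|p̂ − ζ₀| = |q̂ − ζ₀| = R` and `|p̂ − q̂| ≥ √3 · R`. -/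
theorem exists_two_far_contact_points
    (D₀ : Set ℂ) (hne : D₀.Nonempty) (hconv : Convex ℝ D₀) (hopen : IsOpen D₀)
    (hbdd : Bornology.IsBounded D₀) (ζ₀ : ℂ) (hζ₀ : ζ₀ ∈ D₀)
    (hmax : ∀ ζ ∈ D₀, infDist ζ (frontier D₀) ≤ infDist ζ₀ (frontier D₀)) :
    ∃ p q : ℂ, p ∈ frontier D₀ ∧ q ∈ frontier D₀ ∧ p ≠ q ∧
      dist p ζ₀ = infDist ζ₀ (frontier D₀) ∧
      dist q ζ₀ = infDist ζ₀ (frontier D₀) ∧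
      Real.sqrt 3 * infDist ζ₀ (frontier D₀) ≤ dist p q := by
  classical
  set F := frontier D₀ with hFdef
  set R := infDist ζ₀ F with hRdef
  have hFclosed : IsClosed F := isClosed_frontier
  have hFbdd : Bornology.IsBounded F :=
    (hbdd.closure).subset frontier_subset_closure
  have hFcompact : IsCompact F := Metric.isCompact_of_isClosed_isBounded hFclosed hFbdd
  -- some point outside D₀
  obtain ⟨rr, hrr⟩ := hbdd.subset_closedBall ζ₀
  have hout : (ζ₀ + ((|rr| + 1 : ℝ) : ℂ)) ∉ D₀ := by
    intro h
    have h2 := hrr h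
    rw [Metric.mem_closedBall, Complex.dist_eq] at h2
    simp only [add_sub_cancel_left, Complex.norm_real, Real.norm_eq_abs] at h2
    have h3 : 0 ≤ |rr| + 1 := by positivity
    rw [_root_.abs_of_nonneg h3] at h2
    have : rr ≤ |rr| := le_abs_self rr
    linarith
  -- frontier nonempty
  have hFne : F.Nonempty := by
    by_contra hfe
    rw [Set.not_nonempty_iff_eq_empty] at hfe
    have hclopen : IsClopen D₀ := isClopen_iff_frontier_eq_empty.mpr hfe
    rcases isClopen_iff.mp hclopen with h | h
    · exact absurd h (Set.nonempty_iff_ne_empty.mp hne)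
    · exact hout (h ▸ Set.mem_univ _)
  -- ζ₀ not on frontier, R > 0
  have hζ₀F : ζ₀ ∉ F := by
    intro h
    rw [hFdef, hopen.frontier_eq] at h
    exact h.2 hζ₀
  have hRpos : 0 < R := (hFclosed.notMem_iff_infDist_pos hFne).mp hζ₀F
  have hdistF : ∀ r ∈ F, R ≤ dist ζ₀ r := fun r hr => infDist_le_dist_of_mem hr
  -- open ball of radius R is inside D₀
  have hball : ball ζ₀ R ⊆ D₀ := by
    have hpre : IsPreconnected (ball ζ₀ R) := (convex_ball ζ₀ R).isPreconnected
    refine hpre.subset_left_of_subset_union hopen (isClosed_closure (s := D₀)).isOpen_compl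
      ?_ ?_ ⟨ζ₀, mem_ball_self hRpos, hζ₀⟩
    · exact Set.disjoint_left.mpr fun x hx hx2 => hx2 (subset_closure hx)
    · intro x hx
      by_cases hxD : x ∈ D₀
      · exact Or.inl hxD
      · refine Or.inr fun hxc => ?_
        have hxF : x ∈ F := by
          rw [hFdef, hopen.frontier_eq]; exact ⟨hxc, hxD⟩
        have := hdistF x hxF
        rw [mem_ball, dist_comm] at hx
        linarith
  -- contact set
  set K : Set ℂ := {r | r ∈ F ∧ dist r ζ₀ = R} with hKdef
  have hKsub : K ⊆ F := fun r hr => hr.1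
  have hKclosed : IsClosed K := by
    have : K = F ∩ (fun r => dist r ζ₀) ⁻¹' {R} := by
      ext r; simp [hKdef]
    rw [this]
    exact hFclosed.inter (isClosed_singleton.preimage (continuous_id.dist continuous_const))
  have hKcompact : IsCompact K := hFcompact.of_isClosed_subset hKclosed hKsub
  obtain ⟨p₀, hp₀F, hp₀d⟩ := hFcompact.exists_infDist_eq_dist hFne ζ₀
  have hKne : K.Nonempty := ⟨p₀, hp₀F, by rw [dist_comm]; exact hp₀d.symm⟩
  -- by contradiction
  by_contra hcon
  push_neg at hcon
  have hKpair : ∀ r ∈ K, ∀ r' ∈ K, dist r r' < Real.sqrt 3 * R := by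
    intro r hr r' hr'
    rcases eq_or_ne r r' with rfl | hne'
    · simp only [dist_self]
      positivity
    · exact hcon r r' hr.1 hr'.1 hne' hr.2 hr'.2
  -- maximizing pair
  obtain ⟨⟨p, q⟩, hpq, hmaxpair⟩ := (hKcompact.prod hKcompact).exists_isMaxOn
    (hKne.prod hKne) (continuous_dist.continuousOn)
  have hpK : p ∈ K := hpq.1
  have hqK : q ∈ K := hpq.2
  set d := dist p q with hddef
  have hdmax : ∀ r ∈ K, ∀ r' ∈ K, dist r r' ≤ d := by
    intro r hr r' hr'
    exact isMaxOn_iff.mp hmaxpair (r, r') (Set.mk_mem_prod hr hr')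
  have hdlt : d < Real.sqrt 3 * R := hKpair p hpK q hqK
  have hd3 : d ^ 2 < 3 * R ^ 2 := by
    have h3 : Real.sqrt 3 ^ 2 = 3 := Real.sq_sqrt (by norm_num)
    nlinarith [dist_nonneg (x := p) (y := q), Real.sqrt_nonneg 3, hRpos]
  set U := p - ζ₀ with hUdef
  set W := q - ζ₀ with hWdef
  set V := U + W with hVdef
  have hnU : Complex.normSq U = R ^ 2 := by
    rw [hUdef, ← dist_sq_eq_normSq, hpK.2]
  have hnW : Complex.normSq W = R ^ 2 := by
    rw [hWdef, ← dist_sq_eq_normSq, hqK.2]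
  set A := (W * conj U).re with hAdef
  set B := (W * conj U).im with hBdef
  have hAeq : 2 * A = 2 * R ^ 2 - d ^ 2 := by
    have := re_mul_conj' W U
    have hWU : Complex.normSq (W - U) = d ^ 2 := by
      have : W - U = q - p := by rw [hWdef, hUdef]; ring
      rw [this, ← dist_sq_eq_normSq, dist_comm, hddef]
    rw [hAdef, this, hnU, hnW, hWU]; ring
  have hAlb : -(R ^ 2 / 2) < A := by linarith
  have hab : A ^ 2 + B ^ 2 = (R ^ 2) ^ 2 := by
    have : Complex.normSq (W * conj U) = Complex.normSq W * Complex.normSq U := by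
      rw [Complex.normSq_mul, Complex.normSq_conj]
    rw [Complex.normSq_apply] at this
    rw [hAdef, hBdef]
    rw [hnU, hnW] at this
    nlinarith [this]
  set c := R ^ 2 + A with hcdef
  have hcpos : 0 < c := by
    rw [hcdef]; nlinarith
  have hR2pos : 0 < R ^ 2 := by positivity
  -- every contact point direction has inner product ≥ c with V
  have hKlow : ∀ r ∈ K, c ≤ ((r - ζ₀) * conj V).re := by
    intro r hr
    set S := r - ζ₀ with hSdef
    have hnS : Complex.normSq S = R ^ 2 := by
      rw [hSdef, ← dist_sq_eq_normSq, hr.2]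
    set X := (S * conj U).re with hXdef
    set Y := (S * conj U).im with hYdef
    have hxy : X ^ 2 + Y ^ 2 = (R ^ 2) ^ 2 := by
      have : Complex.normSq (S * conj U) = Complex.normSq S * Complex.normSq U := by
        rw [Complex.normSq_mul, Complex.normSq_conj]
      rw [Complex.normSq_apply] at this
      rw [hXdef, hYdef]
      rw [hnS, hnU] at this
      nlinarith [this]
    have hXeq : 2 * X = 2 * R ^ 2 - dist r p ^ 2 := by
      have := re_mul_conj' S U
      have hSU : Complex.normSq (S - U) = dist r p ^ 2 := by
        have h1 : S - U = r - p := by rw [hSdef, hUdef]; ring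
        rw [h1, ← dist_sq_eq_normSq]
      rw [hXdef, this, hnS, hnU, hSU]; ring
    have h1 : A ≤ X := by
      have hrp : dist r p ≤ d := hdmax r hr p hpK
      have : dist r p ^ 2 ≤ d ^ 2 := by nlinarith [dist_nonneg (x := r) (y := p)]
      linarith
    have hSW : 2 * (S * conj W).re = 2 * R ^ 2 - dist r q ^ 2 := by
      have := re_mul_conj' S W
      have hSW2 : Complex.normSq (S - W) = dist r q ^ 2 := by
        have h1 : S - W = r - q := by rw [hSdef, hWdef]; ring
        rw [h1, ← dist_sq_eq_normSq]
      rw [this, hnS, hnW, hSW2]; ring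
    have hSWge : A ≤ (S * conj W).re := by
      have hrq : dist r q ≤ d := hdmax r hr q hqK
      have : dist r q ^ 2 ≤ d ^ 2 := by nlinarith [dist_nonneg (x := r) (y := q)]
      linarith
    have h2 : A * R ^ 2 ≤ X * A + Y * B := by
      have hia := inner_assoc' S U W
      rw [hnU] at hia
      rw [← hXdef, ← hYdef, ← hAdef, ← hBdef] at hia
      rw [hia]
      exact mul_le_mul_of_nonneg_right hSWge hR2pos.le |>.trans_eq (mul_comm _ _)
    have hkey := key_homog (R ^ 2) A B X Y hR2pos hab hxy hAlb h1 h2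
    -- (S * conj V).re = X + (S * conj W).re
    have hVre : (S * conj V).re = X + (S * conj W).re := by
      rw [hVdef, map_add, mul_add, Complex.add_re, hXdef]
    have hia := inner_assoc' S U W
    rw [hnU] at hia
    rw [← hXdef, ← hYdef, ← hAdef, ← hBdef] at hia
    -- R^2 * (S * conj V).re ≥ R^2 * c
    have hmul : R ^ 2 * c ≤ R ^ 2 * (S * conj V).re := by
      rw [hVre, hcdef]
      nlinarith [hkey, hia]
    exact le_of_mul_le_mul_left hmul hR2pos
  -- far set
  set F' : Set ℂ := {r ∈ F | ((r - ζ₀) * conj V).re ≤ c / 2} with hF'def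
  have hF'closed : IsClosed F' := by
    have hcont : Continuous fun r : ℂ => ((r - ζ₀) * conj V).re := by
      apply Complex.continuous_re.comp
      exact (continuous_id.sub continuous_const).mul continuous_const
    exact hFclosed.inter (isClosed_le hcont continuous_const)
  have hF'compact : IsCompact F' :=
    hFcompact.of_isClosed_subset hF'closed (fun r hr => hr.1)
  obtain ⟨R', hR'gt, hR'bd⟩ : ∃ R', R < R' ∧ ∀ r ∈ F', R' ≤ dist ζ₀ r := by
    rcases F'.eq_empty_or_nonempty with he | hne' 
    · exact ⟨R + 1, by linarith, by simp [he]⟩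
    · obtain ⟨r₀, hr₀, hmin⟩ := hF'compact.exists_isMinOn hne'
        ((continuous_const.dist continuous_id).continuousOn)
      refine ⟨dist ζ₀ r₀, ?_, fun r hr => isMinOn_iff.mp hmin r hr⟩
      rcases lt_or_eq_of_le (hdistF r₀ hr₀.1) with h | h
      · exact h
      · exfalso
        have hr₀K : r₀ ∈ K := ⟨hr₀.1, by rw [dist_comm]; exact h.symm⟩
        have := hKlow r₀ hr₀K
        have := hr₀.2
        linarith
  -- choose ε
  set M := ‖V‖ with hMdef
  have hMnn : 0 ≤ M := norm_nonneg V
  set ε := min ((R' - R) / (2 * (M + 1))) (R / (2 * (M + 1))) with hεdef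
  have hεpos : 0 < ε := by
    apply lt_min
    · apply div_pos (by linarith) (by positivity)
    · apply div_pos hRpos (by positivity)
  have hεM1 : ε * (M + 1) ≤ (R' - R) / 2 := by
    have h1 : ε ≤ (R' - R) / (2 * (M + 1)) := min_le_left _ _
    have hM1 : 0 < M + 1 := by linarith
    calc ε * (M + 1) ≤ (R' - R) / (2 * (M + 1)) * (M + 1) :=
          mul_le_mul_of_nonneg_right h1 hM1.le
      _ = (R' - R) / 2 := by field_simp
  have hεM2 : ε * (M + 1) ≤ R / 2 := by
    have h1 : ε ≤ R / (2 * (M + 1)) := min_le_right _ _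
    have hM1 : 0 < M + 1 := by linarith
    calc ε * (M + 1) ≤ R / (2 * (M + 1)) * (M + 1) := mul_le_mul_of_nonneg_right h1 hM1.le
      _ = R / 2 := by field_simp
  have hεMlt : ε * M < ε * (M + 1) := by nlinarith
  set ζ₁ := ζ₀ - (ε : ℂ) * V with hζ₁def
  have hdζ : dist ζ₁ ζ₀ = ε * M := by
    rw [Complex.dist_eq, hζ₁def]
    have : ζ₀ - (ε : ℂ) * V - ζ₀ = -((ε : ℂ) * V) := by ring
    rw [this, norm_neg, norm_mul, Complex.norm_real, Real.norm_eq_abs, abs_of_pos hεpos, hMdef]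
  have hζ₁D : ζ₁ ∈ D₀ := by
    apply hball
    rw [mem_ball, hdζ]
    calc ε * M < ε * (M + 1) := hεMlt
      _ ≤ R / 2 := hεM2
      _ < R := by linarith
  -- lower bound for dist ζ₁ r for r ∈ F
  have hlow : ∀ r ∈ F, min (Real.sqrt (R ^ 2 + ε * c)) (R' - ε * M) ≤ dist ζ₁ r := by
    intro r hr
    by_cases hr' : ((r - ζ₀) * conj V).re ≤ c / 2
    · -- far case
      have hrF' : r ∈ F' := ⟨hr, hr'⟩
      have h1 : R' ≤ dist ζ₀ r := hR'bd r hrF'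
      have htri : dist ζ₀ r ≤ dist ζ₀ ζ₁ + dist ζ₁ r := dist_triangle _ _ _
      rw [dist_comm ζ₀ ζ₁, hdζ] at htri
      exact (min_le_right _ _).trans (by linarith)
    · push_neg at hr'
      have hsq : R ^ 2 + ε * c ≤ dist ζ₁ r ^ 2 := by
        have hds : dist ζ₁ r ^ 2 = Complex.normSq (r - ζ₁) := by
          rw [dist_comm, dist_sq_eq_normSq]
        have hsplit : r - ζ₁ = (r - ζ₀) + (ε : ℂ) * V := by rw [hζ₁def]; ring
        rw [hds, hsplit, Complex.normSq_add]
        have hre : ((r - ζ₀) * conj ((ε : ℂ) * V)).re = ε * ((r - ζ₀) * conj V).re := by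
          rw [map_mul, Complex.conj_ofReal]
          have : (r - ζ₀) * ((ε : ℂ) * conj V) = (ε : ℂ) * ((r - ζ₀) * conj V) := by ring
          rw [this, Complex.re_ofReal_mul]
        rw [hre]
        have hnr : R ^ 2 ≤ Complex.normSq (r - ζ₀) := by
          rw [← dist_sq_eq_normSq]
          have h0 := hdistF r hr
          rw [dist_comm] at h0
          nlinarith [dist_nonneg (x := r) (y := ζ₀)]
        have hnn : 0 ≤ Complex.normSq ((ε : ℂ) * V) := Complex.normSq_nonneg _
        nlinarith [hr', hεpos]
      have h2 : Real.sqrt (R ^ 2 + ε * c) ≤ dist ζ₁ r := by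
        have := Real.sqrt_le_sqrt hsq
        rwa [Real.sqrt_sq dist_nonneg] at this
      exact (min_le_left _ _).trans h2
  -- conclude infDist ζ₁ F > R
  have hRl1 : R < Real.sqrt (R ^ 2 + ε * c) := by
    rw [Real.lt_sqrt hRpos.le]
    nlinarith [hεpos, hcpos]
  have hRl2 : R < R' - ε * M := by
    have : ε * M ≤ (R' - R) / 2 := le_of_lt (hεMlt.trans_le hεM1)
    linarith
  have hmlt : R < min (Real.sqrt (R ^ 2 + ε * c)) (R' - ε * M) := lt_min hRl1 hRl2
  have hinf : min (Real.sqrt (R ^ 2 + ε * c)) (R' - ε * M) ≤ infDist ζ₁ F := by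
    by_contra hlt
    push_neg at hlt
    obtain ⟨y, hy, hylt⟩ := (infDist_lt_iff hFne).mp hlt
    exact absurd hylt (not_lt.mpr (hlow y hy))
  have := hmax ζ₁ hζ₁D
  linarith
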